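/- arXiv:2408.00227 — 2 statements merged into one kernel-verified Lean document; each statement's English description precedes it below -/
import Mathlib

section
/- Let G be a Monge DAG on {s,...,N}, λ ∈ ℝ, and (m,n) with n ∈ {s+1,...,N}, 1 ≤ m ≤ n-s. Let f(m,n) be the minimum length of m-link s-n paths, and define δ(m,n) = f(m+1,n) - f(m,n) (with f(0,n) = f(n-s+1,n) = +∞). Let G(λ) be G with λ subtracted from every edge length, and d_min(λ,n) the least link count among shortest s-n paths in G(λ). Then d_min(λ,n) ≤ m if and only if λ ≤ δ(m,n). -/
/-- A Monge (submodular) edge-length function on the complete DAG on `{s,...,N}`. -/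
def IsMonge (s N : ℕ) (c : ℕ → ℕ → ℝ) : Prop :=
  ∀ i₁ i₂ j₂ j₁ : ℕ, s ≤ i₁ → i₁ < i₂ → i₂ < j₂ → j₂ < j₁ → j₁ ≤ N →
    c i₁ j₂ + c i₂ j₁ ≤ c i₁ j₁ + c i₂ j₂

/-- `v 0, v 1, ..., v m` is an `m`-link path from `a` to `b` inside `{s,...,N}`. -/
def IsPath (s N a b m : ℕ) (v : ℕ → ℕ) : Prop :=
  v 0 = a ∧ v m = b ∧ (∀ k < m, v k < v (k + 1)) ∧ s ≤ a ∧ b ≤ N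

/-- The length of the `m`-link path `v 0, ..., v m` under edge lengths `c`. -/
def pathLen (c : ℕ → ℕ → ℝ) (m : ℕ) (v : ℕ → ℕ) : ℝ :=
  ∑ k ∈ Finset.range m, c (v k) (v (k + 1))

/-- The set of lengths of `m`-link `a`-`b` paths in the complete DAG on `{s,...,N}`. -/
def pathLens (s N a b m : ℕ) (c : ℕ → ℕ → ℝ) : Set ℝ :=
  {x | ∃ v, IsPath s N a b m v ∧ pathLen c m v = x}

/-- The set of link counts of shortest `s`-`n` paths in `G(lam)`
    (the graph with `lam` subtracted from every edge length). -/
def DSet (s N n : ℕ) (c : ℕ → ℕ → ℝ) (lam : ℝ) : Set ℕ :=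
  {m | ∃ v, IsPath s N s n m v ∧
    ∀ m' w, IsPath s N s n m' w →
      pathLen c m v - m * lam ≤ pathLen c m' w - m' * lam}

/-- The set of lengths of all `s`-`n` paths (any number of links). -/
def allLens (s N n : ℕ) (c : ℕ → ℕ → ℝ) : Set ℝ :=
  {x | ∃ m v, IsPath s N s n m v ∧ pathLen c m v = x}

/- ----------------- auxiliary lemmas ----------------- -/

lemma path_lt {m : ℕ} {v : ℕ → ℕ} (hv : ∀ k < m, v k < v (k + 1)) :
    ∀ i j, i < j → j ≤ m → v i < v j := by
  intro i j
  induction j with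
  | zero => omega
  | succ j ih =>
    intro hij hjm
    rcases Nat.lt_or_ge i j with h | h
    · exact (ih h (by omega)).trans (hv j (by omega))
    · have : i = j := by omega
      subst this
      exact hv i (by omega)

lemma path_le {m : ℕ} {v : ℕ → ℕ} (hv : ∀ k < m, v k < v (k + 1)) :
    ∀ i j, i ≤ j → j ≤ m → v i ≤ v j := by
  intro i j hij hjm
  rcases Nat.lt_or_ge i j with h | h
  · exact (path_lt hv i j h hjm).le
  · have : i = j := by omega
    subst this; exact le_refl _

lemma path_add {m : ℕ} {v : ℕ → ℕ} (hv : ∀ k < m, v k < v (k + 1)) :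
    ∀ j, j ≤ m → v 0 + j ≤ v j := by
  intro j
  induction j with
  | zero => simp
  | succ j ih =>
    intro h
    have h1 := hv j (by omega)
    have h2 := ih (by omega)
    omega

lemma pathLen_split (c : ℕ → ℕ → ℝ) (m t : ℕ) (v : ℕ → ℕ) (h : t ≤ m) :
    pathLen c m v = (∑ j ∈ Finset.range t, c (v j) (v (j + 1)))
      + ∑ j ∈ Finset.range (m - t), c (v (t + j)) (v (t + j + 1)) := by
  rw [pathLen, ← Finset.sum_range_add_sum_Ico _ h, Finset.sum_Ico_eq_sum_range]

lemma convex_step (s N : ℕ) (c : ℕ → ℕ → ℝ) (hc : IsMonge s N c)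
    (f : ℕ → ℕ → ℝ)
    (hf : ∀ k j, 1 ≤ k → s + k ≤ j → j ≤ N → IsLeast (pathLens s N s j k c) (f k j))
    (n k : ℕ) (hk : 1 ≤ k) (hkn : s + k + 2 ≤ n) (hn2 : n ≤ N) :
    f (k + 1) n + f (k + 1) n ≤ f k n + f (k + 2) n := by
  obtain ⟨p, hp, hpl⟩ := (hf k n hk (by omega) hn2).1
  obtain ⟨q, hq, hql⟩ := (hf (k + 2) n (by omega) (by omega) hn2).1
  obtain ⟨hp0, hpk, hpm, -, -⟩ := hp
  obtain ⟨hq0, hqk, hqm, -, -⟩ := hq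
  set P : ℕ → Prop := fun i => p i < q (i + 1) with hPdef
  have hP0 : P 0 := by
    simp only [hPdef]
    have := hqm 0 (by omega)
    omega
  set i : ℕ := Nat.findGreatest P k with hidef
  have hPi : P i := Nat.findGreatest_spec (Nat.zero_le k) hP0
  have hik : i ≤ k := Nat.findGreatest_le k
  have hilt : i < k := by
    rcases Nat.lt_or_ge i k with h | h
    · exact h
    · exfalso
      have hik' : i = k := by omega
      have h1 : p i < q (i + 1) := hPi
      have h2 : q (k + 1) < q (k + 2) := hqm (k + 1) (by omega)
      rw [hik'] at h1
      omega
  have hq2 : q (i + 2) ≤ p (i + 1) := by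
    by_contra h
    push_neg at h
    exact Nat.findGreatest_is_greatest (by omega : i < i + 1) (by omega : i + 1 ≤ k) h
  have hpiN : p (i + 1) ≤ N := by
    have := path_le hpm (i + 1) k (by omega) (le_refl _)
    omega
  have hspi : s ≤ p i := by
    have := path_le hpm 0 i (by omega) (by omega)
    omega
  have hqlt : q (i + 1) < q (i + 2) := path_lt hqm (i + 1) (i + 2) (by omega) (by omega)
  have hex : c (p i) (q (i + 2)) + c (q (i + 1)) (p (i + 1)) ≤
      c (p i) (p (i + 1)) + c (q (i + 1)) (q (i + 2)) := by
    rcases eq_or_lt_of_le hq2 with h | h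
    · rw [h]
    · exact hc (p i) (q (i + 1)) (q (i + 2)) (p (i + 1)) hspi hPi hqlt h hpiN
  set R : ℕ → ℕ := fun j => if j ≤ i + 1 then q j else p (j - 1) with hRdef
  set R' : ℕ → ℕ := fun j => if j ≤ i then p j else q (j + 1) with hR'def
  have hRpath : IsPath s N s n (k + 1) R := by
    refine ⟨?_, ?_, ?_, le_refl s, hn2⟩
    · simp only [hRdef]
      rw [if_pos (by omega)]
      exact hq0
    · simp only [hRdef]
      rw [if_neg (by omega)]
      simpa using hpk
    · intro j hj
      by_cases h1 : j + 1 ≤ i + 1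
      · simp only [hRdef]
        rw [if_pos (by omega), if_pos h1]
        exact hqm j (by omega)
      · by_cases h2 : j ≤ i + 1
        · have hj' : j = i + 1 := by omega
          simp only [hRdef]
          rw [if_pos h2, if_neg h1]
          subst hj'
          have h3 : i + 1 + 1 - 1 = i + 1 := by omega
          rw [h3]
          exact lt_of_lt_of_le hqlt hq2
        · simp only [hRdef]
          rw [if_neg h2, if_neg h1]
          have h3 : j + 1 - 1 = (j - 1) + 1 := by omega
          rw [h3]
          exact hpm (j - 1) (by omega)
  have hR'path : IsPath s N s n (k + 1) R' := by
    refine ⟨?_, ?_, ?_, le_refl s, hn2⟩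
    · simp only [hR'def]
      rw [if_pos (by omega)]
      exact hp0
    · simp only [hR'def]
      rw [if_neg (by omega)]
      have h3 : k + 1 + 1 = k + 2 := by omega
      rw [h3]
      exact hqk
    · intro j hj
      by_cases h1 : j + 1 ≤ i
      · simp only [hR'def]
        rw [if_pos (by omega), if_pos h1]
        exact hpm j (by omega)
      · by_cases h2 : j ≤ i
        · have hj' : j = i := by omega
          simp only [hR'def]
          rw [if_pos h2, if_neg h1]
          subst hj'
          exact lt_trans hPi hqlt
        · simp only [hR'def]
          rw [if_neg h2, if_neg h1]
          exact hqm (j + 1) (by omega)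
  have eq1 : pathLen c k p = (∑ j ∈ Finset.range i, c (p j) (p (j + 1)))
      + c (p i) (p (i + 1))
      + ∑ j ∈ Finset.range (k - (i + 1)), c (p (i + 1 + j)) (p (i + 1 + j + 1)) := by
    rw [pathLen_split c k (i + 1) p (by omega), Finset.sum_range_succ]
  have eq2 : pathLen c (k + 2) q = (∑ j ∈ Finset.range (i + 1), c (q j) (q (j + 1)))
      + c (q (i + 1)) (q (i + 2))
      + ∑ j ∈ Finset.range (k - i), c (q (i + 2 + j)) (q (i + 2 + j + 1)) := by
    rw [pathLen_split c (k + 2) (i + 2) q (by omega), Finset.sum_range_succ,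
      show k + 2 - (i + 2) = k - i from by omega]
  have eq3 : pathLen c (k + 1) R = (∑ j ∈ Finset.range (i + 1), c (q j) (q (j + 1)))
      + c (q (i + 1)) (p (i + 1))
      + ∑ j ∈ Finset.range (k - (i + 1)), c (p (i + 1 + j)) (p (i + 1 + j + 1)) := by
    rw [pathLen_split c (k + 1) (i + 2) R (by omega), Finset.sum_range_succ,
      show k + 1 - (i + 2) = k - (i + 1) from by omega]
    have e1 : ∑ j ∈ Finset.range (i + 1), c (R j) (R (j + 1)) =
        ∑ j ∈ Finset.range (i + 1), c (q j) (q (j + 1)) := by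
      refine Finset.sum_congr rfl ?_
      intro j hj
      rw [Finset.mem_range] at hj
      simp only [hRdef]
      rw [if_pos (by omega), if_pos (by omega)]
    have e2 : c (R (i + 1)) (R (i + 1 + 1)) = c (q (i + 1)) (p (i + 1)) := by
      simp only [hRdef]
      rw [if_pos (by omega), if_neg (by omega), show i + 1 + 1 - 1 = i + 1 from by omega]
    have e3 : ∑ j ∈ Finset.range (k - (i + 1)), c (R (i + 2 + j)) (R (i + 2 + j + 1)) =
        ∑ j ∈ Finset.range (k - (i + 1)), c (p (i + 1 + j)) (p (i + 1 + j + 1)) := by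
      refine Finset.sum_congr rfl ?_
      intro j hj
      simp only [hRdef]
      rw [if_neg (by omega), if_neg (by omega)]
      have h1 : i + 2 + j - 1 = i + 1 + j := by omega
      have h2 : i + 2 + j + 1 - 1 = i + 1 + j + 1 := by omega
      rw [h1, h2]
    rw [e1, e2, e3]
  have eq4 : pathLen c (k + 1) R' = (∑ j ∈ Finset.range i, c (p j) (p (j + 1)))
      + c (p i) (q (i + 2))
      + ∑ j ∈ Finset.range (k - i), c (q (i + 2 + j)) (q (i + 2 + j + 1)) := by
    rw [pathLen_split c (k + 1) (i + 1) R' (by omega), Finset.sum_range_succ,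
      show k + 1 - (i + 1) = k - i from by omega]
    have e1 : ∑ j ∈ Finset.range i, c (R' j) (R' (j + 1)) =
        ∑ j ∈ Finset.range i, c (p j) (p (j + 1)) := by
      refine Finset.sum_congr rfl ?_
      intro j hj
      rw [Finset.mem_range] at hj
      simp only [hR'def]
      rw [if_pos (by omega), if_pos (by omega)]
    have e2 : c (R' i) (R' (i + 1)) = c (p i) (q (i + 2)) := by
      simp only [hR'def]
      rw [if_pos (by omega), if_neg (by omega)]
    have e3 : ∑ j ∈ Finset.range (k - i), c (R' (i + 1 + j)) (R' (i + 1 + j + 1)) =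
        ∑ j ∈ Finset.range (k - i), c (q (i + 2 + j)) (q (i + 2 + j + 1)) := by
      refine Finset.sum_congr rfl ?_
      intro j hj
      simp only [hR'def]
      rw [if_neg (by omega), if_neg (by omega)]
      have h1 : i + 1 + j + 1 = i + 2 + j := by omega
      rw [h1]
    rw [e1, e2, e3]
  have lb1 : f (k + 1) n ≤ pathLen c (k + 1) R :=
    (hf (k + 1) n (by omega) (by omega) hn2).2 ⟨R, hRpath, rfl⟩
  have lb2 : f (k + 1) n ≤ pathLen c (k + 1) R' :=
    (hf (k + 1) n (by omega) (by omega) hn2).2 ⟨R', hR'path, rfl⟩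
  linarith

/-- `d_min(lam, n) ≤ m` iff `lam ≤ δ(m,n) = f(m+1,n) - f(m,n)`
(with `δ(n-s, n) = +∞`, i.e. the bound holds unconditionally for `m = n - s`). -/
theorem stmt10 (s N n m : ℕ) (c : ℕ → ℕ → ℝ) (hc : IsMonge s N c)
    (f : ℕ → ℕ → ℝ)
    (hf : ∀ k j, 1 ≤ k → s + k ≤ j → j ≤ N → IsLeast (pathLens s N s j k c) (f k j))
    (lam : ℝ) (hn1 : s + 1 ≤ n) (hn2 : n ≤ N) (hm1 : 1 ≤ m) (hm2 : s + m ≤ n)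
    (dmin : ℕ) (hd : IsLeast (DSet s N n c lam) dmin) :
    (s + m < n → (dmin ≤ m ↔ lam ≤ f (m + 1) n - f m n)) ∧
    (s + m = n → dmin ≤ m) := by
  have hsn : s < n := by omega
  have hub : ∀ m' (v : ℕ → ℕ), IsPath s N s n m' v → 1 ≤ m' ∧ m' ≤ n - s := by
    intro m' v hv
    obtain ⟨h0, hm', hmono, -, -⟩ := hv
    have h1 := path_add hmono m' (le_refl _)
    constructor
    · by_contra h
      have hz : m' = 0 := by omega
      rw [hz] at hm'
      omega
    · omega
  have flb : ∀ k (v : ℕ → ℕ), IsPath s N s n k v → f k n ≤ pathLen c k v := by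
    intro k v hv
    obtain ⟨hk1, hk2⟩ := hub k v hv
    exact (hf k n hk1 (by omega) hn2).2 ⟨v, hv, rfl⟩
  have char : ∀ m', m' ∈ DSet s N n c lam ↔
      (1 ≤ m' ∧ m' ≤ n - s ∧ ∀ k, 1 ≤ k → k ≤ n - s →
        f m' n - m' * lam ≤ f k n - k * lam) := by
    intro m'
    simp only [DSet, Set.mem_setOf_eq]
    constructor
    · rintro ⟨v, hv, hopt⟩
      obtain ⟨h1, h2⟩ := hub m' v hv
      refine ⟨h1, h2, ?_⟩
      intro k hk1 hk2
      obtain ⟨w, hw, hwl⟩ := (hf k n hk1 (by omega) hn2).1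
      have h3 := hopt k w hw
      have h4 := flb m' v hv
      rw [hwl] at h3
      linarith
    · rintro ⟨h1, h2, h3⟩
      obtain ⟨v, hv, hvl⟩ := (hf m' n h1 (by omega) hn2).1
      refine ⟨v, hv, ?_⟩
      intro k w hw
      obtain ⟨hk1, hk2⟩ := hub k w hw
      have h4 := flb k w hw
      have h5 := h3 k hk1 hk2
      rw [hvl]
      linarith
  have dmono : ∀ a b, 1 ≤ a → a ≤ b → s + b + 1 ≤ n →
      f (a + 1) n - f a n ≤ f (b + 1) n - f b n := by
    intro a b ha hab
    induction b, hab using Nat.le_induction with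
    | base => intro _; exact le_refl _
    | succ b hab ih =>
      intro hb
      have h1 := ih (by omega)
      have h2 := convex_step s N c hc f hf n b (by omega) (by omega) hn2
      linarith
  obtain ⟨hdD, hdlb⟩ := hd
  obtain ⟨hd1, hd2, hd3⟩ := (char dmin).1 hdD
  constructor
  · intro hslt
    constructor
    · -- dmin ≤ m → lam ≤ δ(m)
      intro hdm
      have key : ∀ t, dmin + t ≤ m + 1 →
          f (dmin + t) n - (dmin + t : ℕ) * lam ≤
            f dmin n - (dmin : ℕ) * lam + t * (f (m + 1) n - f m n - lam) := by
        intro t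
        induction t with
        | zero => intro _; simp
        | succ t ih =>
          intro h
          have ih' := ih (by omega)
          have hdd : f (dmin + t + 1) n - f (dmin + t) n ≤ f (m + 1) n - f m n :=
            dmono (dmin + t) m (by omega) (by omega) (by omega)
          have hrw : dmin + (t + 1) = dmin + t + 1 := by omega
          rw [hrw]
          push_cast
          push_cast at ih'
          linarith
      have ht : dmin + (m + 1 - dmin) = m + 1 := by omega
      have h1 := key (m + 1 - dmin) (by omega)
      rw [ht] at h1
      have h2 : f dmin n - (dmin : ℕ) * lam ≤ f (m + 1) n - ((m + 1 : ℕ) : ℝ) * lam := by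
        have := hd3 (m + 1) (by omega) (by omega)
        push_cast at this ⊢
        linarith
      have h3 : (1 : ℝ) ≤ ((m + 1 - dmin : ℕ) : ℝ) := by
        exact_mod_cast (by omega : 1 ≤ m + 1 - dmin)
      by_contra hcc
      push_neg at hcc
      have h4 : ((m + 1 - dmin : ℕ) : ℝ) * (f (m + 1) n - f m n - lam) < 0 :=
        mul_neg_of_pos_of_neg (by linarith) (by linarith)
      push_cast at h1 h2
      linarith
    · -- lam ≤ δ(m) → dmin ≤ m
      intro hlam
      by_contra hcon
      push_neg at hcon
      have gmono : ∀ j, m ≤ j → j ≤ n - s →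
          f m n - (m : ℕ) * lam ≤ f j n - (j : ℕ) * lam := by
        intro j hj1
        induction j, hj1 using Nat.le_induction with
        | base => intro _; exact le_refl _
        | succ j hj ih =>
          intro h2
          have h3 := ih (by omega)
          have h4 : f (m + 1) n - f m n ≤ f (j + 1) n - f j n :=
            dmono m j hm1 hj (by omega)
          push_cast
          linarith
      have hmem : m ∈ DSet s N n c lam := by
        refine (char m).2 ⟨hm1, by omega, ?_⟩
        intro k hk1 hk2
        calc f m n - (m : ℕ) * lam ≤ f dmin n - (dmin : ℕ) * lam :=
              gmono dmin (by omega) hd2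
          _ ≤ f k n - (k : ℕ) * lam := hd3 k hk1 hk2
      have := hdlb hmem
      omega
  · intro hmn
    omega
end

section
/- Let G be a Monge DAG on {s,...,N}, λ ∈ ℝ, and (m,n) with n ∈ {s+1,...,N}, 1 ≤ m ≤ n-s. With f, δ, G(λ) as before and d_max(λ,n) the greatest link count among shortest s-n paths in G(λ): d_max(λ,n) ≥ m if and only if λ ≥ δ(m-1,n). -/
lemma path_add_s11 {s N a b m : ℕ} {v : ℕ → ℕ} (h : IsPath s N a b m v) :
    ∀ d j, j + d ≤ m → v j + d ≤ v (j + d) := by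
  intro d
  induction d with
  | zero => intro j _; simp
  | succ d ih =>
      intro j hj
      have h1 := ih j (by omega)
      have h2 := h.2.2.1 (j + d) (by omega)
      show v j + (d + 1) ≤ v (j + d + 1)
      omega

lemma path_lb {s N a b m : ℕ} {v : ℕ → ℕ} (h : IsPath s N a b m v) :
    a + m ≤ b := by
  have := path_add_s11 h m 0 (by omega)
  have e : 0 + m = m := by omega
  rw [e, h.1, h.2.1] at this
  exact this

lemma path_s_le {s N a b m : ℕ} {v : ℕ → ℕ} (h : IsPath s N a b m v)
    (j : ℕ) (hj : j ≤ m) : a ≤ v j := by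
  have := path_add_s11 h j 0 (by omega)
  have e : 0 + j = j := by omega
  rw [e, h.1] at this
  omega

lemma path_le_b {s N a b m : ℕ} {v : ℕ → ℕ} (h : IsPath s N a b m v)
    (j : ℕ) (hj : j ≤ m) : v j ≤ b := by
  have := path_add_s11 h (m - j) j (by omega)
  have he : j + (m - j) = m := by omega
  rw [he, h.2.1] at this
  omega

lemma sum_split (g : ℕ → ℝ) (a b : ℕ) (h : a < b) :
    ∑ i ∈ Finset.range b, g i
      = (∑ i ∈ Finset.range a, g i) + g a + ∑ i ∈ Finset.Ico (a+1) b, g i := by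
  rw [Finset.range_eq_Ico,
    ← Finset.sum_Ico_consecutive g (Nat.zero_le a) h.le,
    Finset.sum_eq_sum_Ico_succ_bot h]
  rw [← Finset.range_eq_Ico]
  ring

lemma convexf (s N n : ℕ) (c : ℕ → ℕ → ℝ) (hc : IsMonge s N c)
    (f : ℕ → ℕ → ℝ)
    (hf : ∀ k j, 1 ≤ k → s + k ≤ j → j ≤ N → IsLeast (pathLens s N s j k c) (f k j))
    (hn2 : n ≤ N) (k : ℕ) (hk : 1 ≤ k) (hkn : s + (k + 2) ≤ n) :
    f (k+1) n - f k n ≤ f (k+2) n - f (k+1) n := by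
  obtain ⟨p, hp, hpl⟩ := (hf k n hk (by omega) hn2).1
  obtain ⟨q, hq, hql⟩ := (hf (k+2) n (by omega) hkn hn2).1
  -- find crossing index t
  have hex : ∃ i, q (i+2) ≤ p (i+1) := by
    refine ⟨k - 1, ?_⟩
    have h1 : q (k - 1 + 2) < q (k + 2) := by
      have := path_add_s11 hq (k + 2 - (k - 1 + 2)) (k - 1 + 2) (by omega)
      have e : k - 1 + 2 + (k + 2 - (k - 1 + 2)) = k + 2 := by omega
      rw [e] at this; omega
    have e : k - 1 + 1 = k := by omega
    rw [e, hp.2.1]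
    have h3 := hq.2.1
    omega
  classical
  obtain ⟨t, htp, htmin⟩ : ∃ t, (q (t+2) ≤ p (t+1)) ∧ ∀ i < t, p (i+1) < q (i+2) :=
    ⟨Nat.find hex, Nat.find_spec hex, fun i hi => by
      have := Nat.find_min hex hi; omega⟩
  have htk : t ≤ k - 1 := by
    by_contra hcon
    have := htmin (k-1) (by omega)
    have h1 : q (k - 1 + 2) < q (k + 2) := by
      have h2 := path_add_s11 hq (k + 2 - (k - 1 + 2)) (k - 1 + 2) (by omega)
      have e : k - 1 + 2 + (k + 2 - (k - 1 + 2)) = k + 2 := by omega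
      rw [e] at h2; omega
    have e : k - 1 + 1 = k := by omega
    rw [e, hp.2.1] at this
    have h3 := hq.2.1
    omega
  have htk' : t + 1 ≤ k := by omega
  have hpq : p t < q (t + 1) := by
    rcases Nat.eq_zero_or_pos t with h0 | h0
    · subst h0
      show p 0 < q 1
      have h1 : q 0 < q 1 := hq.2.2.1 0 (by omega)
      rw [hq.1] at h1
      rw [hp.1]
      omega
    · have := htmin (t - 1) (by omega)
      have e1 : t - 1 + 1 = t := by omega
      have e2 : t - 1 + 2 = t + 1 := by omega
      rw [e1, e2] at this
      exact this
  have hq12 : q (t+1) < q (t+2) := hq.2.2.1 (t+1) (by omega)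
  -- the two spliced paths
  set A : ℕ → ℕ := fun i => if i ≤ t then p i else q (i + 1) with hA
  set B : ℕ → ℕ := fun i => if i ≤ t + 1 then q i else p (i - 1) with hB
  have hApath : IsPath s N s n (k+1) A := by
    refine ⟨?_, ?_, ?_, hp.2.2.2.1, hp.2.2.2.2⟩
    · simp only [hA]; rw [if_pos (Nat.zero_le t)]; exact hp.1
    · simp only [hA]; rw [if_neg (by omega)]
      have e : k + 1 + 1 = k + 2 := rfl
      rw [e, hq.2.1]
    · intro i hi
      simp only [hA]
      rcases lt_trichotomy i t with h | h | h
      · rw [if_pos h.le, if_pos (by omega)]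
        exact hp.2.2.1 i (by omega)
      · rw [if_pos (le_of_eq h), if_neg (by omega), h]
        have e : t + 1 + 1 = t + 2 := by omega
        rw [e]
        omega
      · rw [if_neg (by omega), if_neg (by omega)]
        exact hq.2.2.1 (i+1) (by omega)
  have hBpath : IsPath s N s n (k+1) B := by
    refine ⟨?_, ?_, ?_, hq.2.2.2.1, hq.2.2.2.2⟩
    · simp only [hB]; rw [if_pos (Nat.zero_le _)]; exact hq.1
    · simp only [hB]; rw [if_neg (by omega)]
      have e : k + 1 - 1 = k := by omega
      rw [e, hp.2.1]
    · intro i hi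
      simp only [hB]
      rcases lt_trichotomy i (t+1) with h | h | h
      · rw [if_pos h.le, if_pos (by omega)]
        exact hq.2.2.1 i (by omega)
      · subst h
        rw [if_pos le_rfl, if_neg (by omega)]
        have e : t + 1 + 1 - 1 = t + 1 := by omega
        rw [e]
        omega
      · rw [if_neg (by omega), if_neg (by omega)]
        have e : i + 1 - 1 = i - 1 + 1 := by omega
        rw [e]
        exact hp.2.2.1 (i-1) (by omega)
  -- length decompositions
  have hlenA : pathLen c (k+1) A =
      (∑ i ∈ Finset.range t, c (p i) (p (i+1))) + c (p t) (q (t+2))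
        + ∑ i ∈ Finset.Ico (t+1) (k+1), c (q (i+1)) (q (i+2)) := by
    unfold pathLen
    rw [sum_split _ t (k+1) (by omega)]
    congr 1
    · congr 1
      · refine Finset.sum_congr rfl fun i hi => ?_
        simp only [Finset.mem_range] at hi
        simp only [hA]
        rw [if_pos (by omega), if_pos (by omega)]
      · simp only [hA]
        rw [if_pos le_rfl, if_neg (by omega)]
    · refine Finset.sum_congr rfl fun i hi => ?_
      simp only [Finset.mem_Ico] at hi
      simp only [hA]
      rw [if_neg (by omega), if_neg (by omega)]
  have hlenB : pathLen c (k+1) B =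
      (∑ i ∈ Finset.range (t+1), c (q i) (q (i+1))) + c (q (t+1)) (p (t+1))
        + ∑ i ∈ Finset.Ico (t+2) (k+1), c (p (i-1)) (p i) := by
    unfold pathLen
    rw [sum_split _ (t+1) (k+1) (by omega)]
    congr 1
    · congr 1
      · refine Finset.sum_congr rfl fun i hi => ?_
        simp only [Finset.mem_range] at hi
        simp only [hB]
        rw [if_pos (by omega), if_pos (by omega)]
      · simp only [hB]
        rw [if_pos le_rfl, if_neg (by omega)]
        have e : t + 1 + 1 - 1 = t + 1 := by omega
        rw [e]
    · refine Finset.sum_congr rfl fun i hi => ?_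
      simp only [Finset.mem_Ico] at hi
      simp only [hB]
      rw [if_neg (by omega), if_neg (by omega)]
      have e : i + 1 - 1 = i := by omega
      rw [e]
  have hlenP : pathLen c k p =
      (∑ i ∈ Finset.range t, c (p i) (p (i+1))) + c (p t) (p (t+1))
        + ∑ i ∈ Finset.Ico (t+1) k, c (p i) (p (i+1)) := by
    unfold pathLen
    rw [sum_split _ t k (by omega)]
  have hlenQ : pathLen c (k+2) q =
      (∑ i ∈ Finset.range (t+1), c (q i) (q (i+1))) + c (q (t+1)) (q (t+2))
        + ∑ i ∈ Finset.Ico (t+2) (k+2), c (q i) (q (i+1)) := by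
    unfold pathLen
    rw [sum_split _ (t+1) (k+2) (by omega)]
  -- reindexings
  have hsh1 : ∑ i ∈ Finset.Ico (t+1) (k+1), c (q (i+1)) (q (i+2))
      = ∑ i ∈ Finset.Ico (t+2) (k+2), c (q i) (q (i+1)) := by
    rw [Finset.sum_Ico_eq_sum_range, Finset.sum_Ico_eq_sum_range]
    have e : k + 1 - (t + 1) = k + 2 - (t + 2) := by omega
    rw [e]
    refine Finset.sum_congr rfl fun i _ => ?_
    have e1 : t + 1 + i + 1 = t + 2 + i := by omega
    have e2 : t + 1 + i + 2 = t + 2 + i + 1 := by omega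
    rw [e1, e2]
  have hsh2 : ∑ i ∈ Finset.Ico (t+2) (k+1), c (p (i-1)) (p i)
      = ∑ i ∈ Finset.Ico (t+1) k, c (p i) (p (i+1)) := by
    rw [Finset.sum_Ico_eq_sum_range, Finset.sum_Ico_eq_sum_range]
    have e : k + 1 - (t + 2) = k - (t + 1) := by omega
    rw [e]
    refine Finset.sum_congr rfl fun i _ => ?_
    have e1 : t + 2 + i - 1 = t + 1 + i := by omega
    have e2 : t + 2 + i = t + 1 + i + 1 := by omega
    rw [e1, e2]
  -- Monge / degenerate exchange inequality
  have key : c (p t) (q (t+2)) + c (q (t+1)) (p (t+1))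
      ≤ c (p t) (p (t+1)) + c (q (t+1)) (q (t+2)) := by
    rcases eq_or_lt_of_le htp with he | hlt
    · rw [← he]
    · refine hc (p t) (q (t+1)) (q (t+2)) (p (t+1)) ?_ hpq hq12 hlt ?_
      · have := path_s_le hp t (by omega)
        omega
      · have := path_le_b hp (t+1) (by omega)
        omega
  -- conclude
  have hAmem : f (k+1) n ≤ pathLen c (k+1) A :=
    (hf (k+1) n (by omega) (by omega) hn2).2 ⟨A, hApath, rfl⟩
  have hBmem : f (k+1) n ≤ pathLen c (k+1) B :=
    (hf (k+1) n (by omega) (by omega) hn2).2 ⟨B, hBpath, rfl⟩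
  have hsum : pathLen c (k+1) A + pathLen c (k+1) B
      ≤ pathLen c k p + pathLen c (k+2) q := by
    rw [hlenA, hlenB, hlenP, hlenQ, hsh1, hsh2]
    linarith
  rw [hpl, hql] at hsum
  linarith

lemma monod (s N n : ℕ) (c : ℕ → ℕ → ℝ) (hc : IsMonge s N c)
    (f : ℕ → ℕ → ℝ)
    (hf : ∀ k j, 1 ≤ k → s + k ≤ j → j ≤ N → IsLeast (pathLens s N s j k c) (f k j))
    (hn2 : n ≤ N) :
    ∀ a b, 1 ≤ a → a ≤ b → s + (b + 1) ≤ n →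
      f (a+1) n - f a n ≤ f (b+1) n - f b n := by
  intro a b ha hab
  induction b, hab using Nat.le_induction with
  | base => intro _; exact le_refl _
  | succ b hab ih =>
      intro hb
      have h1 := ih (by omega)
      have h2 := convexf s N n c hc f hf hn2 b (by omega) (by omega)
      linarith

lemma teleUp (g : ℕ → ℝ) (lam' : ℝ) :
    ∀ a b, a ≤ b → (∀ j, a ≤ j → j < b → g (j+1) - g j ≤ lam') →
      g b - g a ≤ ((b - a : ℕ) : ℝ) * lam' := by
  intro a b hab
  induction b, hab using Nat.le_induction with
  | base => intro _; simp
  | succ b hab ih =>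
      intro h
      have h1 := h b hab (by omega)
      have h2 := ih (fun j hj hjb => h j hj (by omega))
      have e : ((b + 1 - a : ℕ) : ℝ) = ((b - a : ℕ) : ℝ) + 1 := by
        have : b + 1 - a = (b - a) + 1 := by omega
        rw [this]; push_cast; ring
      rw [e]
      linarith

lemma teleLow (g : ℕ → ℝ) (lam' : ℝ) :
    ∀ a b, a ≤ b → (∀ j, a ≤ j → j < b → lam' ≤ g (j+1) - g j) →
      ((b - a : ℕ) : ℝ) * lam' ≤ g b - g a := by
  intro a b hab
  induction b, hab using Nat.le_induction with
  | base => intro _; simp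
  | succ b hab ih =>
      intro h
      have h1 := h b hab (by omega)
      have h2 := ih (fun j hj hjb => h j hj (by omega))
      have e : ((b + 1 - a : ℕ) : ℝ) = ((b - a : ℕ) : ℝ) + 1 := by
        have : b + 1 - a = (b - a) + 1 := by omega
        rw [this]; push_cast; ring
      rw [e]
      linarith

/-- `d_max(lam, n) ≥ m` iff `lam ≥ δ(m-1,n) = f(m,n) - f(m-1,n)`
(with `δ(0,n) = -∞`, i.e. the bound holds unconditionally for `m = 1`). -/
theorem stmt11 (s N n m : ℕ) (c : ℕ → ℕ → ℝ) (hc : IsMonge s N c)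
    (f : ℕ → ℕ → ℝ)
    (hf : ∀ k j, 1 ≤ k → s + k ≤ j → j ≤ N → IsLeast (pathLens s N s j k c) (f k j))
    (lam : ℝ) (hn1 : s + 1 ≤ n) (hn2 : n ≤ N) (hm1 : 1 ≤ m) (hm2 : s + m ≤ n)
    (dmax : ℕ) (hd : IsGreatest (DSet s N n c lam) dmax) :
    (2 ≤ m → (m ≤ dmax ↔ f m n - f (m - 1) n ≤ lam)) ∧
    (m = 1 → 1 ≤ dmax) := by
  obtain ⟨v₀, hv₀, hopt⟩ := hd.1
  have hdm1 : 1 ≤ dmax := by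
    rcases Nat.eq_zero_or_pos dmax with h0 | h0
    · exfalso
      have h1 := hv₀.1
      have h2 := hv₀.2.1
      rw [h0] at h2
      rw [h1] at h2
      omega
    · exact h0
  have hdns : s + dmax ≤ n := path_lb hv₀
  have hfd : f dmax n ≤ pathLen c dmax v₀ :=
    (hf dmax n hdm1 hdns hn2).2 ⟨v₀, hv₀, rfl⟩
  refine ⟨?_, fun _ => hdm1⟩
  intro hm2'
  have hm' : m - 1 + 1 = m := by omega
  constructor
  · -- m ≤ dmax → δ(m-1) ≤ lam
    intro hmd
    obtain ⟨w, hw, hwl⟩ := (hf (m-1) n (by omega) (by omega) hn2).1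
    have hop := hopt (m-1) w hw
    rw [hwl] at hop
    have h2 : f dmax n - (dmax : ℝ) * lam ≤ f (m-1) n - ((m-1 : ℕ) : ℝ) * lam := by
      linarith
    have h1 := teleLow (fun k => f k n) (f m n - f (m-1) n) (m-1) dmax (by omega)
      (by
        intro j hj hjd
        have := monod s N n c hc f hf hn2 (m-1) j (by omega) hj (by omega)
        rw [hm'] at this
        linarith)
    have hcast : ((dmax - (m-1) : ℕ) : ℝ) = (dmax : ℝ) - ((m-1 : ℕ) : ℝ) :=
      Nat.cast_sub (by omega)
    rw [hcast] at h1
    have hXpos : (0:ℝ) < (dmax : ℝ) - ((m-1 : ℕ) : ℝ) := by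
      have : ((m-1 : ℕ) : ℝ) < (dmax : ℝ) := by
        exact_mod_cast Nat.lt_of_lt_of_le (by omega) hmd
      linarith
    have hXX : ((dmax : ℝ) - ((m-1 : ℕ) : ℝ)) * (f m n - f (m-1) n)
        ≤ ((dmax : ℝ) - ((m-1 : ℕ) : ℝ)) * lam := by nlinarith [h1, h2]
    exact le_of_mul_le_mul_left hXX hXpos
  · -- δ(m-1) ≤ lam → m ≤ dmax
    intro hδ
    rcases le_or_gt m dmax with h | hlt
    · exact h
    exfalso
    have h1 := teleUp (fun k => f k n) lam dmax m hlt.le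
      (by
        intro j hj hjm
        rcases eq_or_lt_of_le (show j ≤ m - 1 by omega) with he | hl
        · rw [he, hm']
          exact hδ
        · have := monod s N n c hc f hf hn2 j (m-1) (by omega) (by omega) (by omega)
          rw [hm'] at this
          linarith)
    have hcast : ((m - dmax : ℕ) : ℝ) = (m : ℝ) - (dmax : ℝ) :=
      Nat.cast_sub hlt.le
    rw [hcast] at h1
    obtain ⟨u, hu, hul⟩ := (hf m n hm1 hm2 hn2).1
    have hmem : m ∈ DSet s N n c lam := by
      refine ⟨u, hu, ?_⟩
      intro m' w hw
      have hop := hopt m' w hw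
      rw [hul]
      linarith
    have := hd.2 hmem
    omega
end
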